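/- For every queen q on the (n,d)-board, the number of squares attacked by q, including its own square, is at least (2^d − 1)·(n − 1) + 1; this minimum is attained by the queen placed at the corner (1, 1, …, 1). -/
import Mathlib


/-- A point `q` lies on the `(n,d)`-board, i.e. all coordinates are in `{1,…,n}`. -/
def onBoard (n d : ℕ) (q : Fin d → ℕ) : Prop :=
  ∀ i, 1 ≤ q i ∧ q i ≤ n

/-- Queen `a` attacks queen `b`: there are an integer `m` and a nonzero vector
`ε ∈ {-1,0,1}^d` with `a i = ε i * m + b i` for all `i`. -/
def attacks {d : ℕ} (a b : Fin d → ℕ) : Prop :=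
  ∃ (m : ℤ) (ε : Fin d → ℤ), (∀ i, ε i = -1 ∨ ε i = 0 ∨ ε i = 1) ∧ ε ≠ 0 ∧
    ∀ i, (a i : ℤ) = ε i * m + (b i : ℤ)

/-- A set of queens is non-attacking if no two distinct members attack each other. -/
def nonAttacking {d : ℕ} (Q : Finset (Fin d → ℕ)) : Prop :=
  ∀ a ∈ Q, ∀ b ∈ Q, a ≠ b → ¬ attacks a b

/-- A partial solution on the `(n,d)`-board: a non-attacking set fitting the board. -/
def isPartial (n d : ℕ) (Q : Finset (Fin d → ℕ)) : Prop :=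
  (∀ q ∈ Q, onBoard n d q) ∧ nonAttacking Q

/-- A solution to the `(n,d)`-queens problem: a non-attacking set of `n^(d-1)` queens. -/
def isSolution (n d : ℕ) (Q : Finset (Fin d → ℕ)) : Prop :=
  isPartial n d Q ∧ Q.card = n ^ (d - 1)

/-- The `(n,d)`-board as a finite set. -/
def boardFinset (n d : ℕ) : Finset (Fin d → ℕ) :=
  Fintype.piFinset fun _ => Finset.Icc 1 n

/-- `Qmax n d` : the maximum cardinality of a non-attacking set on the `(n,d)`-board. -/
noncomputable def Qmax (n d : ℕ) : ℕ :=
  sSup {k | ∃ Q : Finset (Fin d → ℕ), isPartial n d Q ∧ Q.card = k}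

open scoped Classical in
/-- The set of board squares attacked by the queen `q`, including its own square. -/
noncomputable def attackedSet (n d : ℕ) (q : Fin d → ℕ) : Finset (Fin d → ℕ) :=
  (boardFinset n d).filter (fun b => b = q ∨ attacks q b)

namespace QAux

variable (n : ℕ) {d : ℕ} (q : Fin d → ℕ)

/-- remaining room in direction `i`: upward if `i ∈ T`, downward otherwise. -/
def room (T : Finset (Fin d)) (i : Fin d) : ℕ := if i ∈ T then n - q i else q i - 1

/-- number of steps available along the line with support `p.1`, positive coords `p.2`. -/
def cnt (p : Finset (Fin d) × Finset (Fin d)) : ℕ :=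
  if p.2 ⊆ p.1 ∧ p.1.Nonempty then p.1.fold min (n - 1) (room n q p.2) else 0

def Phi (p : Finset (Fin d) × Finset (Fin d)) (m : ℕ) : Fin d → ℕ :=
  fun i => if i ∈ p.2 then q i + m else if i ∈ p.1 then q i - m else q i

def V : Finset ((Finset (Fin d) × Finset (Fin d)) × ℕ) :=
  Finset.univ.biUnion fun p => (Finset.Icc 1 (cnt n q p)).image fun m => (p, m)

lemma mem_V {x : (Finset (Fin d) × Finset (Fin d)) × ℕ} :
    x ∈ V n q ↔ 1 ≤ x.2 ∧ x.2 ≤ cnt n q x.1 := by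
  simp only [V, Finset.mem_biUnion, Finset.mem_image, Finset.mem_univ, true_and,
    Finset.mem_Icc]
  constructor
  · rintro ⟨p, m, hm, rfl⟩; exact hm
  · intro h; exact ⟨x.1, x.2, h, rfl⟩

lemma card_V : (V n q).card = ∑ p : Finset (Fin d) × Finset (Fin d), cnt n q p := by
  rw [V, Finset.card_biUnion]
  · refine Finset.sum_congr rfl fun p _ => ?_
    rw [Finset.card_image_of_injective _ (fun a b (h : (p,a) = (p,b)) => by simpa using h)]
    simp
  · intro x _ y _ hxy
    simp only [Finset.disjoint_left, Finset.mem_image]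
    rintro a ⟨m, _, rfl⟩ ⟨m', _, h⟩
    have : y = x := (Prod.ext_iff.mp h).1
    exact hxy this.symm

lemma aux_min_sum {A : Type*} (F : Finset A) (g : A → ℕ) (c : ℕ) :
    min c (∑ x ∈ F, g x) ≤ ∑ x ∈ F, min c (g x) := by
  induction F using Finset.cons_induction with
  | empty => simp
  | cons a F ha ih => rw [Finset.sum_cons, Finset.sum_cons]; omega

lemma minsum {ι : Type*} [DecidableEq ι] (r s : ι → ℕ) (c : ℕ)
    {S : Finset ι} (hS : S.Nonempty) (h : ∀ i ∈ S, r i + s i = c) :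
    c ≤ ∑ T ∈ S.powerset, S.fold min c (fun i => if i ∈ T then s i else r i) := by
  induction hS using Finset.Nonempty.cons_induction with
  | singleton j =>
    have hj := h j (by simp)
    have hpow : ({j} : Finset ι).powerset = {∅, {j}} := rfl
    rw [hpow, show ({∅, {j}} : Finset (Finset ι)) = insert ∅ {({j} : Finset ι)} from rfl,
      Finset.sum_insert (by rw [Finset.mem_singleton]; exact (Finset.singleton_ne_empty j).symm)]
    simp [Finset.fold_singleton]
    omega
  | cons j S' hj hS' ih =>
    have hc : ∀ i ∈ S', r i + s i = c := fun i hi => h i (Finset.mem_cons_of_mem hi)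
    have ihc := ih hc
    rw [Finset.cons_eq_insert, Finset.sum_powerset_insert hj]
    have key : ∀ T ∈ S'.powerset,
        min c (S'.fold min c (fun i => if i ∈ T then s i else r i)) ≤
        (insert j S').fold min c (fun i => if i ∈ T then s i else r i)
        + (insert j S').fold min c (fun i => if i ∈ insert j T then s i else r i) := by
      intro T hT
      have hjT : j ∉ T := fun hmem => hj (Finset.mem_powerset.mp hT hmem)
      rw [Finset.fold_insert hj, Finset.fold_insert hj]
      rw [if_neg hjT, if_pos (Finset.mem_insert_self j T)]
      have hcongr : S'.fold min c (fun i => if i ∈ insert j T then s i else r i)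
          = S'.fold min c (fun i => if i ∈ T then s i else r i) := by
        refine Finset.fold_congr fun i hi => ?_
        have : i ≠ j := fun hij => hj (hij ▸ hi)
        simp [Finset.mem_insert, this]
      rw [hcongr]
      have hrs := h j (Finset.mem_cons_self j S')
      omega
    calc c = min c c := (min_self c).symm
    _ ≤ min c (∑ T ∈ S'.powerset, S'.fold min c (fun i => if i ∈ T then s i else r i)) := by
        omega
    _ ≤ ∑ T ∈ S'.powerset, min c (S'.fold min c (fun i => if i ∈ T then s i else r i)) :=
        aux_min_sum _ _ _
    _ ≤ _ := by
        rw [← Finset.sum_add_distrib]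
        exact Finset.sum_le_sum key

lemma card_nonempty_finsets :
    ((Finset.univ : Finset (Finset (Fin d))).filter (fun S => S.Nonempty)).card = 2 ^ d - 1 := by
  have h : (Finset.univ : Finset (Finset (Fin d))).filter (fun S => S.Nonempty)
      = Finset.univ.erase ∅ := by
    ext S
    simp [Finset.nonempty_iff_ne_empty]
  rw [h, Finset.card_erase_of_mem (Finset.mem_univ _), Finset.card_univ, Fintype.card_finset,
    Fintype.card_fin]

lemma sum_cnt_ge (hq : onBoard n d q) :
    (2 ^ d - 1) * (n - 1) ≤ ∑ p : Finset (Fin d) × Finset (Fin d), cnt n q p := by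
  rw [Fintype.sum_prod_type]
  have h1 : ∀ S ∈ (Finset.univ : Finset (Finset (Fin d))).filter (fun S => S.Nonempty),
      (n - 1) ≤ ∑ T : Finset (Fin d), cnt n q (S, T) := by
    intro S hS
    have hSne : S.Nonempty := by simpa using hS
    have hmin := minsum (fun i => q i - 1) (fun i => n - q i) (n - 1) hSne
      (fun i _ => by have := hq i; show q i - 1 + (n - q i) = n - 1; omega)
    calc n - 1 ≤ ∑ T ∈ S.powerset,
          S.fold min (n - 1) (fun i => if i ∈ T then n - q i else q i - 1) := hmin
    _ = ∑ T ∈ S.powerset, cnt n q (S, T) := by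
        refine Finset.sum_congr rfl fun T hT => ?_
        rw [cnt, if_pos ⟨Finset.mem_powerset.mp hT, hSne⟩]
        rfl
    _ ≤ ∑ T : Finset (Fin d), cnt n q (S, T) :=
        Finset.sum_le_sum_of_subset (Finset.subset_univ _)
  calc (2 ^ d - 1) * (n - 1)
      = ∑ _S ∈ (Finset.univ : Finset (Finset (Fin d))).filter (fun S => S.Nonempty), (n - 1) := by
        rw [Finset.sum_const, card_nonempty_finsets, smul_eq_mul]
  _ ≤ ∑ S ∈ (Finset.univ : Finset (Finset (Fin d))).filter (fun S => S.Nonempty),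
        ∑ T : Finset (Fin d), cnt n q (S, T) := Finset.sum_le_sum h1
  _ ≤ ∑ S : Finset (Fin d), ∑ T : Finset (Fin d), cnt n q (S, T) :=
        Finset.sum_le_sum_of_subset (Finset.filter_subset _ _)

lemma cnt_corner (p : Finset (Fin d) × Finset (Fin d)) :
    cnt n (fun _ => 1) p = if p.2 = p.1 ∧ p.1.Nonempty then n - 1 else 0 := by
  rcases p with ⟨S, T⟩
  by_cases h : T ⊆ S ∧ S.Nonempty
  · rw [cnt, if_pos h]
    dsimp only
    by_cases hTS : T = S
    · subst hTS
      rw [if_pos ⟨rfl, h.2⟩]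
      refine le_antisymm ((Finset.fold_min_le _).mpr (Or.inl le_rfl)) ?_
      refine (Finset.le_fold_min _).mpr ⟨le_rfl, fun i hi => ?_⟩
      simp [room, hi]
    · rw [if_neg (fun hc => hTS hc.1)]
      obtain ⟨i₀, hi₀S, hi₀T⟩ := Finset.exists_of_ssubset (lt_of_le_of_ne h.1 hTS)
      have : S.fold min (n - 1) (room n (fun _ => 1) T) ≤ room n (fun _ => 1) T i₀ :=
        (Finset.fold_min_le _).mpr (Or.inr ⟨i₀, hi₀S, le_rfl⟩)
      have hr : room n (fun _ => 1) T i₀ = 0 := by simp [room, hi₀T]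
      omega
  · rw [cnt, if_neg h]
    dsimp only
    rw [if_neg (fun hc : T = S ∧ S.Nonempty => h ⟨hc.1 ▸ le_rfl, hc.2⟩)]

lemma sum_cnt_corner :
    ∑ p : Finset (Fin d) × Finset (Fin d), cnt n (fun _ => 1) p = (2 ^ d - 1) * (n - 1) := by
  simp_rw [cnt_corner]
  rw [Fintype.sum_prod_type]
  have h1 : ∀ S : Finset (Fin d),
      (∑ T : Finset (Fin d), if T = S ∧ S.Nonempty then n - 1 else 0)
      = if S.Nonempty then n - 1 else 0 := by
    intro S
    have h2 : ∀ T : Finset (Fin d), (if T = S ∧ S.Nonempty then n - 1 else 0)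
        = if T = S then (if S.Nonempty then n - 1 else 0) else 0 := by
      intro T; by_cases hT : T = S <;> by_cases hS : S.Nonempty <;> simp [hT, hS]
    simp_rw [h2]
    rw [Finset.sum_ite_eq' Finset.univ S (fun _ => if S.Nonempty then n - 1 else 0),
      if_pos (Finset.mem_univ S)]
  simp_rw [h1]
  rw [← Finset.sum_filter, Finset.sum_const, card_nonempty_finsets, smul_eq_mul]


lemma valid_facts {x : (Finset (Fin d) × Finset (Fin d)) × ℕ} (hx : x ∈ V n q) :
    x.1.2 ⊆ x.1.1 ∧ x.1.1.Nonempty ∧ 1 ≤ x.2 ∧ x.2 ≤ n - 1 ∧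
      (∀ i ∈ x.1.2, x.2 ≤ n - q i) ∧ (∀ i ∈ x.1.1, i ∉ x.1.2 → x.2 ≤ q i - 1) := by
  obtain ⟨h1, h2⟩ := (mem_V n q).mp hx
  have hpos : cnt n q x.1 ≠ 0 := by omega
  rw [cnt] at h2
  by_cases h : x.1.2 ⊆ x.1.1 ∧ x.1.1.Nonempty
  · rw [if_pos h] at h2
    obtain ⟨hle, hall⟩ := (Finset.le_fold_min _).mp h2
    refine ⟨h.1, h.2, h1, hle, fun i hi => ?_, fun i hi hni => ?_⟩
    · have := hall i (h.1 hi); rwa [room, if_pos hi] at this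
    · have := hall i hi; rwa [room, if_neg hni] at this
  · rw [cnt, if_neg h] at hpos; omega

/-- characterization of the coordinates of `Phi x`. -/
lemma Phi_char {x : (Finset (Fin d) × Finset (Fin d)) × ℕ} (hx : x ∈ V n q)
    (hq : onBoard n d q) (i : Fin d) :
    (i ∈ x.1.2 → Phi q x.1 x.2 i = q i + x.2) ∧
    (i ∈ x.1.1 → i ∉ x.1.2 → Phi q x.1 x.2 i + x.2 = q i) ∧
    (i ∉ x.1.1 → Phi q x.1 x.2 i = q i) := by
  obtain ⟨hTS, hSne, hm1, hmn, hup, hdown⟩ := valid_facts n q hx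
  refine ⟨fun hiT => ?_, fun hiS hiT => ?_, fun hiS => ?_⟩
  · rw [Phi, if_pos hiT]
  · have := hdown i hiS hiT
    have := (hq i).1
    rw [Phi, if_neg hiT, if_pos hiS]
    omega
  · have hiT : i ∉ x.1.2 := fun hc => hiS (hTS hc)
    rw [Phi, if_neg hiT, if_neg hiS]

lemma Phi_mem_board {x : (Finset (Fin d) × Finset (Fin d)) × ℕ} (hx : x ∈ V n q)
    (hq : onBoard n d q) : Phi q x.1 x.2 ∈ boardFinset n d := by
  obtain ⟨hTS, hSne, hm1, hmn, hup, hdown⟩ := valid_facts n q hx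
  rw [boardFinset, Fintype.mem_piFinset]
  intro i
  rw [Finset.mem_Icc]
  obtain ⟨c1, c2, c3⟩ := Phi_char n q hx hq i
  have hb := hq i
  by_cases hiT : i ∈ x.1.2
  · have := hup i hiT; rw [c1 hiT]; omega
  · by_cases hiS : i ∈ x.1.1
    · have := hdown i hiS hiT; have := c2 hiS hiT; omega
    · rw [c3 hiS]; omega

lemma Phi_attacks {x : (Finset (Fin d) × Finset (Fin d)) × ℕ} (hx : x ∈ V n q)
    (hq : onBoard n d q) : attacks q (Phi q x.1 x.2) := by
  obtain ⟨hTS, hSne, hm1, hmn, hup, hdown⟩ := valid_facts n q hx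
  obtain ⟨i₀, hi₀⟩ := hSne
  refine ⟨(x.2 : ℤ), fun i => if i ∈ x.1.2 then -1 else if i ∈ x.1.1 then 1 else 0,
    fun i => by by_cases h1 : i ∈ x.1.2 <;> by_cases h2 : i ∈ x.1.1 <;> simp [h1, h2], ?_, ?_⟩
  · intro hzero
    have := congrFun hzero i₀
    simp only [Pi.zero_apply] at this
    by_cases hiT : i₀ ∈ x.1.2 <;> simp [hiT, hi₀] at this
  · intro i
    obtain ⟨c1, c2, c3⟩ := Phi_char n q hx hq i
    by_cases hiT : i ∈ x.1.2
    · have e := c1 hiT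
      simp only [hiT, if_true, ite_true]
      omega
    · by_cases hiS : i ∈ x.1.1
      · have e := c2 hiS hiT
        simp only [hiT, hiS, if_true, if_false, ite_true, ite_false]
        omega
      · have e := c3 hiS
        simp only [hiT, hiS, if_true, if_false, ite_true, ite_false]
        omega

lemma attacked_mem_image {b : Fin d → ℕ} (hb : b ∈ boardFinset n d) (hq : onBoard n d q)
    (hatt : attacks q b) (hne : b ≠ q) : ∃ x ∈ V n q, Phi q x.1 x.2 = b := by
  obtain ⟨m, ε, hε, hε0, heq⟩ := hatt
  have hboard : ∀ i, 1 ≤ b i ∧ b i ≤ n := by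
    intro i
    have := (Fintype.mem_piFinset.mp hb) i
    rwa [Finset.mem_Icc] at this
  have hm : m ≠ 0 := by
    rintro rfl
    apply hne
    funext i
    have := heq i
    simp only [mul_zero, zero_add] at this
    exact_mod_cast this.symm
  classical
  set S : Finset (Fin d) := Finset.univ.filter (fun i => ε i ≠ 0) with hS
  set T : Finset (Fin d) := Finset.univ.filter (fun i => ε i * m < 0) with hT
  set m' : ℕ := m.natAbs with hm'
  have key : ∀ i, (ε i = 0 ∧ b i = q i) ∨ (ε i * m < 0 ∧ b i = q i + m') ∨
      (0 < ε i * m ∧ b i + m' = q i) := by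
    intro i
    have hi := heq i
    rcases hε i with h | h | h <;> rw [h] at hi ⊢ <;> [skip; skip; skip]
    · rcases lt_trichotomy m 0 with hm0 | hm0 | hm0
      · right; right; constructor; · nlinarith
        omega
      · exact absurd hm0 hm
      · right; left; constructor; · nlinarith
        omega
    · left; exact ⟨rfl, by omega⟩
    · rcases lt_trichotomy m 0 with hm0 | hm0 | hm0
      · right; left; constructor; · nlinarith
        omega
      · exact absurd hm0 hm
      · right; right; constructor; · nlinarith
        omega
  have hTsubS : T ⊆ S := by
    intro i hi
    rw [hT, Finset.mem_filter] at hi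
    rw [hS, Finset.mem_filter]
    refine ⟨Finset.mem_univ _, fun hc => ?_⟩
    rw [hc] at hi; simp at hi
  have hSne : S.Nonempty := by
    obtain ⟨i, hi⟩ := Function.ne_iff.mp hε0
    exact ⟨i, by rw [hS, Finset.mem_filter]; exact ⟨Finset.mem_univ _, hi⟩⟩
  have hroom : ∀ i ∈ S, m' ≤ room n q T i := by
    intro i hi
    rw [hS, Finset.mem_filter] at hi
    have hεm : ε i * m ≠ 0 := mul_ne_zero hi.2 hm
    rcases key i with ⟨h0, _⟩ | ⟨hlt, hb'⟩ | ⟨hgt, hb'⟩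
    · exact absurd h0 hi.2
    · rw [room, if_pos (by rw [hT, Finset.mem_filter]; exact ⟨Finset.mem_univ _, hlt⟩)]
      have := (hboard i).2
      omega
    · rw [room, if_neg (by rw [hT, Finset.mem_filter]; intro hc; omega)]
      have := (hboard i).1
      omega
  have hm'1 : 1 ≤ m' := by omega
  have hm'n : m' ≤ n - 1 := by
    obtain ⟨i₀, hi₀⟩ := hSne
    have := hroom i₀ hi₀
    have h1 := hq i₀
    have h2 := hboard i₀
    rw [room] at this
    split at this <;> omega
  refine ⟨((S, T), m'), ?_, ?_⟩
  · rw [mem_V, cnt, if_pos ⟨hTsubS, hSne⟩]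
    exact ⟨hm'1, (Finset.le_fold_min _).mpr ⟨hm'n, hroom⟩⟩
  · funext i
    by_cases hiT : i ∈ T
    · rw [Phi, if_pos hiT]
      rcases key i with ⟨h0, _⟩ | ⟨_, hb'⟩ | ⟨hgt, _⟩
      · rw [hT, Finset.mem_filter, h0] at hiT; simp at hiT
      · omega
      · rw [hT, Finset.mem_filter] at hiT; omega
    · by_cases hiS : i ∈ S
      · rw [Phi, if_neg hiT, if_pos hiS]
        rw [hS, Finset.mem_filter] at hiS
        rcases key i with ⟨h0, _⟩ | ⟨hlt, _⟩ | ⟨_, hb'⟩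
        · exact absurd h0 hiS.2
        · rw [hT, Finset.mem_filter] at hiT; exact absurd ⟨Finset.mem_univ _, hlt⟩ hiT
        · omega
      · rw [Phi, if_neg hiT, if_neg hiS]
        rw [hS, Finset.mem_filter] at hiS
        rcases key i with ⟨_, h0⟩ | ⟨hlt, _⟩ | ⟨hgt, _⟩
        · omega
        · exact absurd (by exact fun hc => hiS ⟨Finset.mem_univ _, hc⟩) (by
            intro hfn
            exact hfn (fun hc => by rw [hc] at hlt; simp at hlt))
        · exact absurd (fun hc => by rw [hc] at hgt; simp at hgt)
            (fun hfn => hiS ⟨Finset.mem_univ _, hfn⟩)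

lemma attacked_eq (hq : onBoard n d q) :
    attackedSet n d q = insert q ((V n q).image fun x => Phi q x.1 x.2) := by
  classical
  ext b
  simp only [attackedSet, Finset.mem_filter, Finset.mem_insert, Finset.mem_image]
  constructor
  · rintro ⟨hb, hbq | hatt⟩
    · exact Or.inl hbq
    · by_cases hne : b = q
      · exact Or.inl hne
      · obtain ⟨x, hx, hPhi⟩ := attacked_mem_image n q hb hq hatt hne
        exact Or.inr ⟨x, hx, hPhi⟩
  · rintro (rfl | ⟨x, hx, rfl⟩)
    · refine ⟨?_, Or.inl rfl⟩
      rw [boardFinset, Fintype.mem_piFinset]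
      intro i; rw [Finset.mem_Icc]; exact hq i
    · exact ⟨Phi_mem_board n q hx hq, Or.inr (Phi_attacks n q hx hq)⟩

lemma Phi_lt_gt {x : (Finset (Fin d) × Finset (Fin d)) × ℕ} (hx : x ∈ V n q)
    (hq : onBoard n d q) (i : Fin d) :
    (i ∈ x.1.2 ↔ q i < Phi q x.1 x.2 i) ∧
    ((i ∈ x.1.1 ∧ i ∉ x.1.2) ↔ Phi q x.1 x.2 i < q i) := by
  obtain ⟨hTS, hSne, hm1, hmn, hup, hdown⟩ := valid_facts n q hx
  obtain ⟨c1, c2, c3⟩ := Phi_char n q hx hq i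
  by_cases hiT : i ∈ x.1.2
  · have := c1 hiT
    refine ⟨⟨fun _ => by omega, fun _ => hiT⟩, ⟨fun h => absurd hiT h.2, fun h => by omega⟩⟩
  · by_cases hiS : i ∈ x.1.1
    · have := c2 hiS hiT
      exact ⟨⟨fun h => absurd h hiT, fun h => by omega⟩,
        ⟨fun _ => by omega, fun _ => ⟨hiS, hiT⟩⟩⟩
    · have := c3 hiS
      exact ⟨⟨fun h => absurd h hiT, fun h => by omega⟩,
        ⟨fun h => absurd h.1 hiS, fun h => by omega⟩⟩

lemma Phi_injOn (hq : onBoard n d q) :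
    Set.InjOn (fun x : (Finset (Fin d) × Finset (Fin d)) × ℕ => Phi q x.1 x.2) (V n q) := by
  intro x hx y hy hxy
  simp only at hxy
  have key : ∀ i, (i ∈ x.1.2 ↔ i ∈ y.1.2) ∧
      ((i ∈ x.1.1 ∧ i ∉ x.1.2) ↔ (i ∈ y.1.1 ∧ i ∉ y.1.2)) := by
    intro i
    obtain ⟨k1, k2⟩ := Phi_lt_gt n q hx hq i
    obtain ⟨k1', k2'⟩ := Phi_lt_gt n q hy hq i
    rw [hxy] at k1 k2
    exact ⟨k1.trans k1'.symm, k2.trans k2'.symm⟩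
  have hT : x.1.2 = y.1.2 := Finset.ext fun i => (key i).1
  have hS : x.1.1 = y.1.1 := by
    have hTSx := (valid_facts n q hx).1
    have hTSy := (valid_facts n q hy).1
    ext i
    constructor
    · intro h
      by_cases c : i ∈ x.1.2
      · exact hTSy ((key i).1.mp c)
      · exact ((key i).2.mp ⟨h, c⟩).1
    · intro h
      by_cases c : i ∈ y.1.2
      · exact hTSx ((key i).1.mpr c)
      · exact ((key i).2.mpr ⟨h, c⟩).1
  have hm : x.2 = y.2 := by
    obtain ⟨i₀, hi₀⟩ := (valid_facts n q hx).2.1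
    obtain ⟨c1, c2, _⟩ := Phi_char n q hx hq i₀
    obtain ⟨c1', c2', _⟩ := Phi_char n q hy hq i₀
    have hfe := congrFun hxy i₀
    by_cases c : i₀ ∈ x.1.2
    · have e1 := c1 c
      have e2 := c1' ((key i₀).1.mp c)
      omega
    · have e1 := c2 hi₀ c
      have e2 := c2' (hS ▸ hi₀) (fun hc => c ((key i₀).1.mpr hc))
      omega
  have h1 : x.1 = y.1 := Prod.ext hS hT
  exact Prod.ext h1 hm

lemma q_notMem_image (hq : onBoard n d q) :
    q ∉ (V n q).image (fun x : (Finset (Fin d) × Finset (Fin d)) × ℕ => Phi q x.1 x.2) := by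
  intro hmem
  obtain ⟨x, hx, hPhi⟩ := Finset.mem_image.mp hmem
  obtain ⟨i₀, hi₀⟩ := (valid_facts n q hx).2.1
  have hfe := congrFun hPhi i₀
  obtain ⟨k1, k2⟩ := Phi_lt_gt n q hx hq i₀
  by_cases c : i₀ ∈ x.1.2
  · have := k1.mp c; omega
  · have := k2.mp ⟨hi₀, c⟩; omega

lemma card_attackedSet (hq : onBoard n d q) :
    (attackedSet n d q).card = (V n q).card + 1 := by
  rw [attacked_eq n q hq, Finset.card_insert_of_notMem (q_notMem_image n q hq),
    Finset.card_image_of_injOn (Phi_injOn n q hq)]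

end QAux

/-- A queen on the `(n,d)`-board attacks at least `(2^d - 1)*(n - 1) + 1` squares
(including its own); this minimum is attained at the corner `(1,1,…,1)`. -/
theorem attacked_squares_lower_bound (n d : ℕ) (hn : 1 ≤ n) (hd : 1 ≤ d) :
    (∀ q : Fin d → ℕ, onBoard n d q →
      (2 ^ d - 1) * (n - 1) + 1 ≤ (attackedSet n d q).card) ∧
    ((attackedSet n d (fun _ => 1)).card = (2 ^ d - 1) * (n - 1) + 1) := by
  constructor
  · intro q hq
    rw [QAux.card_attackedSet n q hq, QAux.card_V]
    have := QAux.sum_cnt_ge n q hq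
    omega
  · have hcorner : onBoard n d (fun _ => 1) := fun i => ⟨le_rfl, hn⟩
    rw [QAux.card_attackedSet n _ hcorner, QAux.card_V, QAux.sum_cnt_corner]
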